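/- Let X₁, X₂ be positive, identically distributed random variables with common regularly varying tail of index -α (α > 0) which are asymptotically independent, i.e. P[X₁ > x, X₂ > x]/P[X₁ > x] → 0 as x → ∞. Let Θ₁, Θ₂ be positive random variables independent of the pair (X₁, X₂) with E[Θ_t^α] < ∞, P[Θ_t > x] = o(P[X₁ > x]) for t = 1, 2, and suppose each pair (Θ_t, X_t) satisfies P[Θ_t X_t > x] ~ E[Θ_t^α] P[X₁ > x]. Then Θ₁X₁ and Θ₂X₂ are asymptotically independent: P[Θ₁X₁ > x, Θ₂X₂ > x] / P[Θ_t X_t > x] → 0 as x → ∞ for t = 1, 2. -/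

import Mathlib

open MeasureTheory ProbabilityTheory Filter Real Topology Set
open scoped ENNReal

lemma stmt3_indep_apply {Ω β : Type*} [MeasurableSpace Ω] [MeasurableSpace β]
    (μ : Measure Ω) [IsProbabilityMeasure μ] {V : Ω → ℝ} {P : Ω → β}
    (hV : Measurable V) (hP : Measurable P) (h : IndepFun V P μ)
    {S : Set (ℝ × β)} (hS : MeasurableSet S) :
    μ {ω | (V ω, P ω) ∈ S} = ∫⁻ ω, (μ.map P) {b | (V ω, b) ∈ S} ∂μ := by
  haveI : IsProbabilityMeasure (μ.map P) := Measure.isProbabilityMeasure_map hP.aemeasurable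
  have hmap : μ.map (fun ω => (V ω, P ω)) = (μ.map V).prod (μ.map P) :=
    (indepFun_iff_map_prod_eq_prod_map_map hV.aemeasurable hP.aemeasurable).mp h
  have h1 : μ {ω | (V ω, P ω) ∈ S} = μ.map (fun ω => (V ω, P ω)) S := by
    rw [Measure.map_apply (hV.prodMk hP) hS]; rfl
  rw [h1, hmap, Measure.prod_apply hS,
    lintegral_map (measurable_measure_prodMk_left hS) hV]
  rfl

lemma stmt3_key {Ω : Type*} [MeasurableSpace Ω] (μ : Measure Ω) [IsProbabilityMeasure μ]
    (Θ : Ω → ℝ) (hΘ : Measurable Θ) (hΘpos : ∀ ω, 0 < Θ ω)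
    (T J : ℝ → ℝ≥0∞) (hTanti : Antitone T) (hJanti : Antitone J)
    (hTpos : ∀ x, T x ≠ 0) (hT1 : ∀ x, T x ≤ 1) (hJle : ∀ x, J x ≤ T x)
    (α : ℝ)
    (hmom : ∫⁻ ω, ENNReal.ofReal (Θ ω ^ α) ∂μ ≠ ⊤)
    (hrv : ∀ v > (0:ℝ), Tendsto (fun x => (T (x / v)).toReal / (T x).toReal) atTop (𝓝 (v ^ α)))
    (hai : Tendsto (fun x => (J x).toReal / (T x).toReal) atTop (𝓝 0))
    (hB : Tendsto (fun x => (∫⁻ ω, T (x / Θ ω) ∂μ).toReal / (T x).toReal) atTop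
      (𝓝 ((∫⁻ ω, ENNReal.ofReal (Θ ω ^ α) ∂μ).toReal))) :
    Tendsto (fun x => (∫⁻ ω, J (x / Θ ω) ∂μ).toReal / (T x).toReal) atTop (𝓝 0) := by
  set L : ℝ≥0∞ := ∫⁻ ω, ENNReal.ofReal (Θ ω ^ α) ∂μ with hL
  set c : ℝ := L.toReal with hc
  have hTfin : ∀ x, T x ≠ ⊤ := fun x => ((hT1 x).trans_lt ENNReal.one_lt_top).ne
  have hJfin : ∀ x, J x ≠ ⊤ := fun x => (((hJle x).trans (hT1 x)).trans_lt ENNReal.one_lt_top).ne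
  rw [tendsto_iff_seq_tendsto]
  intro u hu
  -- notation
  set A : ℕ → ℝ≥0∞ := fun n => ∫⁻ ω, J (u n / Θ ω) ∂μ with hA
  set B : ℕ → ℝ≥0∞ := fun n => ∫⁻ ω, T (u n / Θ ω) ∂μ with hB'
  have hdivmeas : ∀ r : ℝ, Measurable (fun ω => r / Θ ω) := fun r => measurable_const.div hΘ
  have hmJ : ∀ n, Measurable (fun ω => J (u n / Θ ω) / T (u n)) :=
    fun n => (hJanti.measurable.comp (hdivmeas (u n))).div_const _
  have hmT : ∀ n, Measurable (fun ω => T (u n / Θ ω) / T (u n)) :=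
    fun n => (hTanti.measurable.comp (hdivmeas (u n))).div_const _
  have hBle : ∀ n, B n ≤ 1 := by
    intro n
    calc B n ≤ ∫⁻ _, 1 ∂μ := lintegral_mono fun ω => hT1 _
    _ = 1 := by simp
  have hAle : ∀ n, A n ≤ B n := fun n => lintegral_mono fun ω => hJle _
  have hBfin : ∀ n, B n ≠ ⊤ := fun n => ((hBle n).trans_lt ENNReal.one_lt_top).ne
  have hAfin : ∀ n, A n ≠ ⊤ := fun n => (((hAle n).trans (hBle n)).trans_lt ENNReal.one_lt_top).ne
  have hIB : ∀ n, ∫⁻ ω, T (u n / Θ ω) / T (u n) ∂μ = B n / T (u n) := by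
    intro n
    simp_rw [ENNReal.div_eq_inv_mul]
    rw [lintegral_const_mul' _ _ (ENNReal.inv_ne_top.mpr (hTpos (u n)))]
  have hIA : ∀ n, ∫⁻ ω, J (u n / Θ ω) / T (u n) ∂μ = A n / T (u n) := by
    intro n
    simp_rw [ENNReal.div_eq_inv_mul]
    rw [lintegral_const_mul' _ _ (ENNReal.inv_ne_top.mpr (hTpos (u n)))]
  have hBTfin : ∀ n, B n / T (u n) ≠ ⊤ := by
    intro n
    rw [Ne, ENNReal.div_eq_top]
    push_neg
    exact ⟨fun _ => hTpos _, fun h => absurd h (hBfin n)⟩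
  have hATfin : ∀ n, A n / T (u n) ≠ ⊤ := by
    intro n
    rw [Ne, ENNReal.div_eq_top]
    push_neg
    exact ⟨fun _ => hTpos _, fun h => absurd h (hAfin n)⟩
  -- pointwise limits
  have hptB : ∀ ω, Tendsto (fun n => T (u n / Θ ω) / T (u n)) atTop
      (𝓝 (ENNReal.ofReal (Θ ω ^ α))) := by
    intro ω
    have hv := hΘpos ω
    have hreal : Tendsto (fun n => (T (u n / Θ ω)).toReal / (T (u n)).toReal) atTop
        (𝓝 (Θ ω ^ α)) := (hrv (Θ ω) hv).comp hu
    have := ENNReal.tendsto_ofReal hreal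
    refine this.congr fun n => ?_
    rw [← ENNReal.toReal_div, ENNReal.ofReal_toReal]
    rw [Ne, ENNReal.div_eq_top]
    push_neg
    exact ⟨fun _ => hTpos _, fun h => absurd h (hTfin _)⟩
  have hptA : ∀ ω, Tendsto (fun n => J (u n / Θ ω) / T (u n)) atTop (𝓝 0) := by
    intro ω
    have hv := hΘpos ω
    have h1 : Tendsto (fun x : ℝ => (J (x / Θ ω)).toReal / (T (x / Θ ω)).toReal) atTop
        (𝓝 0) := hai.comp (tendsto_id.atTop_div_const hv)
    have h2 := hrv (Θ ω) hv
    have h3 : Tendsto (fun x : ℝ => (J (x / Θ ω)).toReal / (T x).toReal) atTop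
        (𝓝 (0 * Θ ω ^ α)) := by
      refine (h1.mul h2).congr fun x => ?_
      rw [div_mul_div_cancel₀]
      exact ENNReal.toReal_ne_zero.mpr ⟨hTpos _, hTfin _⟩
    rw [zero_mul] at h3
    have hreal := h3.comp hu
    have := ENNReal.tendsto_ofReal hreal
    rw [ENNReal.ofReal_zero] at this
    refine this.congr fun n => ?_
    simp only [Function.comp_apply]
    rw [← ENNReal.toReal_div, ENNReal.ofReal_toReal]
    rw [Ne, ENNReal.div_eq_top]
    push_neg
    exact ⟨fun _ => hTpos _, fun h => absurd h (hJfin _)⟩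
  -- Fatou
  have hFatou : L ≤ liminf (fun n => B n / T (u n) - A n / T (u n)) atTop := by
    have h1 : ∀ ω, Tendsto (fun n => T (u n / Θ ω) / T (u n) - J (u n / Θ ω) / T (u n)) atTop
        (𝓝 (ENNReal.ofReal (Θ ω ^ α))) := by
      intro ω
      have := ENNReal.Tendsto.sub (hptB ω) (hptA ω) (Or.inr (by simp))
      simpa using this
    have h2 : L = ∫⁻ ω, liminf
        (fun n => T (u n / Θ ω) / T (u n) - J (u n / Θ ω) / T (u n)) atTop ∂μ := by
      rw [hL]
      exact lintegral_congr fun ω => ((h1 ω).liminf_eq).symm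
    rw [h2]
    have h3 := lintegral_liminf_le (fun n => (hmT n).sub (hmJ n)) (μ := μ) (u := atTop)
      (f := fun n ω => T (u n / Θ ω) / T (u n) - J (u n / Θ ω) / T (u n))
    refine h3.trans (liminf_le_liminf ?_)
    filter_upwards with n
    rw [lintegral_sub (hmJ n) (by rw [hIA n]; exact hATfin n)
      (Filter.Eventually.of_forall fun ω => ENNReal.div_le_div_right (hJle _) _), hIA n, hIB n]
  -- real sequences
  have hik : ∀ n, (A n).toReal / (T (u n)).toReal ≤ (B n).toReal / (T (u n)).toReal := by
    intro n
    have hd : (0:ℝ) < (T (u n)).toReal := ENNReal.toReal_pos (hTpos _) (hTfin _)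
    exact div_le_div_of_nonneg_right (ENNReal.toReal_mono (hBfin n) (hAle n)) hd.le
  have hk : Tendsto (fun n => (B n).toReal / (T (u n)).toReal) atTop (𝓝 c) := hB.comp hu
  -- epsilon argument
  show Tendsto (fun n => (A n).toReal / (T (u n)).toReal) atTop (𝓝 0)
  rw [tendsto_order]
  constructor
  · intro b hb
    filter_upwards with n
    exact hb.trans_le (div_nonneg ENNReal.toReal_nonneg ENNReal.toReal_nonneg)
  · intro ε hε
    have h1 : ∀ᶠ n in atTop, (B n).toReal / (T (u n)).toReal < c + ε / 3 :=
      hk.eventually_lt_const (by linarith)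
    have h2 : ∀ᶠ n in atTop,
        c - ε / 3 ≤ (B n).toReal / (T (u n)).toReal - (A n).toReal / (T (u n)).toReal := by
      rcases le_or_gt (c - ε / 3) 0 with h | h
      · filter_upwards with n
        have := hik n
        linarith
      · have hbL : ENNReal.ofReal (c - ε / 3) < L := by
          rw [ENNReal.ofReal_lt_iff_lt_toReal h.le hmom]
          rw [← hc]
          linarith
        have hev := eventually_lt_of_lt_liminf (hbL.trans_le hFatou)
        filter_upwards [hev] with n hn
        have hfin : B n / T (u n) - A n / T (u n) ≠ ⊤ :=
          fun ht => hBTfin n (top_le_iff.mp (ht ▸ tsub_le_self))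
        have := ENNReal.toReal_mono hfin hn.le
        rw [ENNReal.toReal_ofReal h.le] at this
        rw [ENNReal.toReal_sub_of_le (ENNReal.div_le_div_right (hAle n) _) (hBTfin n),
          ENNReal.toReal_div, ENNReal.toReal_div] at this
        linarith
    filter_upwards [h1, h2] with n e1 e2
    linarith

/-- asymptotic independence is preserved under multiplication by
independent positive weights satisfying Breiman-type asymptotics. -/
theorem stmt_3 {Ω : Type*} [MeasurableSpace Ω] (μ : Measure Ω) [IsProbabilityMeasure μ]
    (X₁ X₂ Θ₁ Θ₂ : Ω → ℝ)
    (hX₁ : Measurable X₁) (hX₂ : Measurable X₂) (hΘ₁ : Measurable Θ₁) (hΘ₂ : Measurable Θ₂)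
    (hX₁pos : ∀ ω, 0 < X₁ ω) (hX₂pos : ∀ ω, 0 < X₂ ω)
    (hΘ₁pos : ∀ ω, 0 < Θ₁ ω) (hΘ₂pos : ∀ ω, 0 < Θ₂ ω)
    -- identically distributed
    (hid : IdentDistrib X₁ X₂ μ μ)
    (α : ℝ) (hα : 0 < α)
    -- common regularly varying tail of index -α
    (hrv : ∀ t > (0:ℝ),
      Tendsto (fun x => (μ {ω | X₁ ω > t * x}).toReal / (μ {ω | X₁ ω > x}).toReal)
        atTop (𝓝 (t ^ (-α))))
    -- asymptotic independence of X₁ and X₂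
    (hai : Tendsto (fun x => (μ {ω | X₁ ω > x ∧ X₂ ω > x}).toReal /
        (μ {ω | X₁ ω > x}).toReal) atTop (𝓝 0))
    -- (Θ₁, Θ₂) independent of (X₁, X₂)
    (hindep : IndepFun (fun ω => (Θ₁ ω, Θ₂ ω)) (fun ω => (X₁ ω, X₂ ω)) μ)
    -- moments
    (hmom₁ : ∫⁻ ω, ENNReal.ofReal (Θ₁ ω ^ α) ∂μ ≠ ⊤)
    (hmom₂ : ∫⁻ ω, ENNReal.ofReal (Θ₂ ω ^ α) ∂μ ≠ ⊤)
    -- P[Θ_t > x] = o(P[X₁ > x])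
    (ho₁ : Tendsto (fun x => (μ {ω | Θ₁ ω > x}).toReal / (μ {ω | X₁ ω > x}).toReal)
      atTop (𝓝 0))
    (ho₂ : Tendsto (fun x => (μ {ω | Θ₂ ω > x}).toReal / (μ {ω | X₁ ω > x}).toReal)
      atTop (𝓝 0))
    -- Breiman-type asymptotics for each pair
    (hbr₁ : Tendsto (fun x => (μ {ω | Θ₁ ω * X₁ ω > x}).toReal /
        ((∫⁻ ω, ENNReal.ofReal (Θ₁ ω ^ α) ∂μ).toReal * (μ {ω | X₁ ω > x}).toReal))
      atTop (𝓝 1))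
    (hbr₂ : Tendsto (fun x => (μ {ω | Θ₂ ω * X₂ ω > x}).toReal /
        ((∫⁻ ω, ENNReal.ofReal (Θ₂ ω ^ α) ∂μ).toReal * (μ {ω | X₁ ω > x}).toReal))
      atTop (𝓝 1)) :
    Tendsto (fun x => (μ {ω | Θ₁ ω * X₁ ω > x ∧ Θ₂ ω * X₂ ω > x}).toReal /
        (μ {ω | Θ₁ ω * X₁ ω > x}).toReal) atTop (𝓝 0) ∧
    Tendsto (fun x => (μ {ω | Θ₁ ω * X₁ ω > x ∧ Θ₂ ω * X₂ ω > x}).toReal /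
        (μ {ω | Θ₂ ω * X₂ ω > x}).toReal) atTop (𝓝 0) := by

  -- basic notation
  set T : ℝ → ℝ≥0∞ := fun x => μ {ω | X₁ ω > x} with hT
  set Jm : ℝ → ℝ≥0∞ := fun x => μ {ω | X₁ ω > x ∧ X₂ ω > x} with hJm
  have hTanti : Antitone T := fun a b hab => measure_mono fun ω h => lt_of_le_of_lt hab h
  have hJanti : Antitone Jm := fun a b hab =>
    measure_mono fun ω h => ⟨lt_of_le_of_lt hab h.1, lt_of_le_of_lt hab h.2⟩
  have hT1 : ∀ x, T x ≤ 1 := fun x => prob_le_one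
  have hTfin : ∀ x, T x ≠ ⊤ := fun x => ((hT1 x).trans_lt ENNReal.one_lt_top).ne
  have hJle : ∀ x, Jm x ≤ T x := fun x => measure_mono fun ω h => h.1
  have hTpos : ∀ x, T x ≠ 0 := by
    intro x hx
    have h2 := hrv 2 two_pos
    have hev : ∀ᶠ y in atTop,
        (μ {ω | X₁ ω > 2 * y}).toReal / (μ {ω | X₁ ω > y}).toReal = (0:ℝ) := by
      filter_upwards [eventually_ge_atTop x] with y hy
      have hy0 : μ {ω | X₁ ω > y} = 0 :=
        measure_mono_null (fun ω h => lt_of_le_of_lt hy h) hx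
      simp [hy0]
    have h3 : Tendsto (fun _ : ℝ => (0:ℝ)) atTop (𝓝 ((2:ℝ) ^ (-α))) :=
      (tendsto_congr' hev).mp h2
    have := tendsto_nhds_unique h3 tendsto_const_nhds
    exact absurd this.symm (rpow_pos_of_pos two_pos _).ne
  have hTtoRealpos : ∀ x, 0 < (T x).toReal := fun x => ENNReal.toReal_pos (hTpos x) (hTfin x)
  -- tail of X₂ equals tail of X₁
  have hTid : ∀ r : ℝ, μ {ω | X₂ ω > r} = T r := by
    intro r
    have := hid.measure_mem_eq (s := Ioi r) measurableSet_Ioi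
    exact this.symm
  -- rv in division form
  have hrv' : ∀ v > (0:ℝ),
      Tendsto (fun x => (T (x / v)).toReal / (T x).toReal) atTop (𝓝 (v ^ α)) := by
    intro v hv
    have h1 := hrv (1 / v) (by positivity)
    have hlim : (1 / v) ^ (-α) = v ^ α := by
      rw [one_div, Real.inv_rpow hv.le, Real.rpow_neg hv.le, inv_inv]
    rw [hlim] at h1
    refine h1.congr fun x => ?_
    simp only [one_div_mul_eq_div]
    rfl
  -- independence consequences
  have hind₁X : IndepFun Θ₁ X₁ μ := hindep.comp measurable_fst measurable_fst
  have hind₂X : IndepFun Θ₂ X₂ μ := hindep.comp measurable_snd measurable_snd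
  have hind₁P : IndepFun Θ₁ (fun ω => (X₁ ω, X₂ ω)) μ := hindep.comp measurable_fst measurable_id
  have hind₂P : IndepFun Θ₂ (fun ω => (X₁ ω, X₂ ω)) μ := hindep.comp measurable_snd measurable_id
  -- E1 : P[Θ X > x] as an integral of the tail
  have E1 : ∀ (Θ X : Ω → ℝ), Measurable Θ → (∀ ω, 0 < Θ ω) → Measurable X →
      (∀ r : ℝ, μ {ω | X ω > r} = T r) → IndepFun Θ X μ →
      ∀ x : ℝ, μ {ω | Θ ω * X ω > x} = ∫⁻ ω, T (x / Θ ω) ∂μ := by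
    intro Θ X hΘ hΘpos hX hXT hind x
    have hS : MeasurableSet {p : ℝ × ℝ | p.1 * p.2 > x} :=
      measurableSet_lt measurable_const (measurable_fst.mul measurable_snd)
    have := stmt3_indep_apply μ hΘ hX hind hS
    rw [show {ω | Θ ω * X ω > x} = {ω | (Θ ω, X ω) ∈ {p : ℝ × ℝ | p.1 * p.2 > x}} from rfl, this]
    refine lintegral_congr fun ω => ?_
    have hSm : MeasurableSet {b : ℝ | Θ ω * b > x} :=
      measurableSet_lt measurable_const (measurable_const.mul measurable_id)
    rw [show {b : ℝ | (Θ ω, b) ∈ {p : ℝ × ℝ | p.1 * p.2 > x}} = {b : ℝ | Θ ω * b > x} from rfl]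
    rw [Measure.map_apply hX hSm]
    rw [← hXT (x / Θ ω)]
    congr 1
    ext ω'
    simp only [mem_preimage, mem_setOf_eq, gt_iff_lt]
    rw [div_lt_iff₀' (hΘpos ω)]
  -- E2 : joint probability as integral
  have E2 : ∀ (Θ : Ω → ℝ), Measurable Θ → IndepFun Θ (fun ω => (X₁ ω, X₂ ω)) μ →
      ∀ x : ℝ, μ {ω | X₁ ω > x / Θ ω ∧ X₂ ω > x / Θ ω} = ∫⁻ ω, Jm (x / Θ ω) ∂μ := by
    intro Θ hΘ hind x
    have hS : MeasurableSet {q : ℝ × ℝ × ℝ | q.2.1 > x / q.1 ∧ q.2.2 > x / q.1} := by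
      apply MeasurableSet.inter
      · exact measurableSet_lt (measurable_const.div measurable_fst)
          (measurable_fst.comp measurable_snd)
      · exact measurableSet_lt (measurable_const.div measurable_fst)
          (measurable_snd.comp measurable_snd)
    have := stmt3_indep_apply μ hΘ (hX₁.prodMk hX₂) hind hS
    rw [show {ω | X₁ ω > x / Θ ω ∧ X₂ ω > x / Θ ω}
        = {ω | (Θ ω, X₁ ω, X₂ ω) ∈ {q : ℝ × ℝ × ℝ | q.2.1 > x / q.1 ∧ q.2.2 > x / q.1}} from rfl,
      this]
    refine lintegral_congr fun ω => ?_
    have hSm : MeasurableSet {b : ℝ × ℝ | b.1 > x / Θ ω ∧ b.2 > x / Θ ω} := by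
      apply MeasurableSet.inter
      · exact measurableSet_lt measurable_const measurable_fst
      · exact measurableSet_lt measurable_const measurable_snd
    rw [show {b : ℝ × ℝ | (Θ ω, b) ∈ {q : ℝ × ℝ × ℝ | q.2.1 > x / q.1 ∧ q.2.2 > x / q.1}}
        = {b : ℝ × ℝ | b.1 > x / Θ ω ∧ b.2 > x / Θ ω} from rfl]
    rw [Measure.map_apply (hX₁.prodMk hX₂) hSm]
    rfl
  -- positivity of moment constants
  have hcpos : ∀ (Θ : Ω → ℝ), Measurable Θ → (∀ ω, 0 < Θ ω) →
      (∫⁻ ω, ENNReal.ofReal (Θ ω ^ α) ∂μ) ≠ ⊤ →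
      0 < (∫⁻ ω, ENNReal.ofReal (Θ ω ^ α) ∂μ).toReal := by
    intro Θ hΘ hΘpos hfin
    refine ENNReal.toReal_pos ?_ hfin
    intro h0
    have hmeas : Measurable fun ω => ENNReal.ofReal (Θ ω ^ α) :=
      ENNReal.measurable_ofReal.comp (hΘ.pow measurable_const)
    rw [lintegral_eq_zero_iff hmeas] at h0
    have hpos : ∀ ω, ¬ ENNReal.ofReal (Θ ω ^ α) = 0 := by
      intro ω
      simp only [ENNReal.ofReal_eq_zero, not_le]
      exact Real.rpow_pos_of_pos (hΘpos ω) α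
    have h1 : μ {ω | ¬ ENNReal.ofReal (Θ ω ^ α) = 0} = 0 := by
      rw [Filter.EventuallyEq, ae_iff] at h0
      exact h0
    have h2 : (univ : Set Ω) ⊆ {ω | ¬ ENNReal.ofReal (Θ ω ^ α) = 0} := fun ω _ => hpos ω
    have h3 := measure_mono_null h2 h1
    rw [measure_univ] at h3
    exact one_ne_zero h3
  have hc₁ : 0 < (∫⁻ ω, ENNReal.ofReal (Θ₁ ω ^ α) ∂μ).toReal := hcpos Θ₁ hΘ₁ hΘ₁pos hmom₁
  have hc₂ : 0 < (∫⁻ ω, ENNReal.ofReal (Θ₂ ω ^ α) ∂μ).toReal := hcpos Θ₂ hΘ₂ hΘ₂pos hmom₂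
  -- denominators normalized by the tail
  have hden : ∀ (N : ℝ → ℝ) (c : ℝ), 0 < c →
      Tendsto (fun x => N x / (c * (T x).toReal)) atTop (𝓝 1) →
      Tendsto (fun x => N x / (T x).toReal) atTop (𝓝 c) := by
    intro N c hc h
    have h2 := h.const_mul c
    rw [mul_one] at h2
    refine h2.congr fun x => ?_
    rw [← mul_div_assoc, mul_div_mul_left _ _ hc.ne']
  have hden₁ : Tendsto (fun x => (μ {ω | Θ₁ ω * X₁ ω > x}).toReal / (T x).toReal) atTop
      (𝓝 ((∫⁻ ω, ENNReal.ofReal (Θ₁ ω ^ α) ∂μ).toReal)) := hden _ _ hc₁ hbr₁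
  have hden₂ : Tendsto (fun x => (μ {ω | Θ₂ ω * X₂ ω > x}).toReal / (T x).toReal) atTop
      (𝓝 ((∫⁻ ω, ENNReal.ofReal (Θ₂ ω ^ α) ∂μ).toReal)) := hden _ _ hc₂ hbr₂
  -- Breiman hypotheses in integral form
  have hB₁ : Tendsto (fun x => (∫⁻ ω, T (x / Θ₁ ω) ∂μ).toReal / (T x).toReal) atTop
      (𝓝 ((∫⁻ ω, ENNReal.ofReal (Θ₁ ω ^ α) ∂μ).toReal)) := by
    refine hden₁.congr fun x => ?_
    rw [E1 Θ₁ X₁ hΘ₁ hΘ₁pos hX₁ (fun r => rfl) hind₁X x]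
  have hB₂ : Tendsto (fun x => (∫⁻ ω, T (x / Θ₂ ω) ∂μ).toReal / (T x).toReal) atTop
      (𝓝 ((∫⁻ ω, ENNReal.ofReal (Θ₂ ω ^ α) ∂μ).toReal)) := by
    refine hden₂.congr fun x => ?_
    rw [E1 Θ₂ X₂ hΘ₂ hΘ₂pos hX₂ hTid hind₂X x]
  -- apply the key lemma
  have hA₁ := stmt3_key μ Θ₁ hΘ₁ hΘ₁pos T Jm hTanti hJanti hTpos hT1 hJle α hmom₁ hrv' hai hB₁
  have hA₂ := stmt3_key μ Θ₂ hΘ₂ hΘ₂pos T Jm hTanti hJanti hTpos hT1 hJle α hmom₂ hrv' hai hB₂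
  -- the numerator inclusion
  have hsub : ∀ x : ℝ, 0 ≤ x → {ω | Θ₁ ω * X₁ ω > x ∧ Θ₂ ω * X₂ ω > x} ⊆
      {ω | X₁ ω > x / Θ₁ ω ∧ X₂ ω > x / Θ₁ ω} ∪ {ω | X₁ ω > x / Θ₂ ω ∧ X₂ ω > x / Θ₂ ω} := by
    intro x hx ω hω
    obtain ⟨h1, h2⟩ := hω
    have e1 : x / Θ₁ ω < X₁ ω := (div_lt_iff₀' (hΘ₁pos ω)).mpr h1
    have e2 : x / Θ₂ ω < X₂ ω := (div_lt_iff₀' (hΘ₂pos ω)).mpr h2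
    rcases le_total (Θ₁ ω) (Θ₂ ω) with h | h
    · right
      exact ⟨lt_of_le_of_lt (div_le_div_of_nonneg_left hx (hΘ₁pos ω) h) e1, e2⟩
    · left
      exact ⟨e1, lt_of_le_of_lt (div_le_div_of_nonneg_left hx (hΘ₂pos ω) h) e2⟩
  have hJint_fin : ∀ (Θ : Ω → ℝ) (x : ℝ), (∫⁻ ω, Jm (x / Θ ω) ∂μ) ≠ ⊤ := by
    intro Θ x
    refine ne_top_of_le_ne_top ENNReal.one_ne_top ?_
    calc (∫⁻ ω, Jm (x / Θ ω) ∂μ) ≤ ∫⁻ _, 1 ∂μ :=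
          lintegral_mono fun ω => ((hJle _).trans (hT1 _))
    _ = 1 := by simp
  -- numerator normalized by the tail tends to 0
  have hNum : Tendsto (fun x =>
      (μ {ω | Θ₁ ω * X₁ ω > x ∧ Θ₂ ω * X₂ ω > x}).toReal / (T x).toReal) atTop (𝓝 0) := by
    have hbound : ∀ᶠ x in atTop,
        (μ {ω | Θ₁ ω * X₁ ω > x ∧ Θ₂ ω * X₂ ω > x}).toReal / (T x).toReal ≤
        (∫⁻ ω, Jm (x / Θ₁ ω) ∂μ).toReal / (T x).toReal
          + (∫⁻ ω, Jm (x / Θ₂ ω) ∂μ).toReal / (T x).toReal := by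
      filter_upwards [eventually_ge_atTop (0:ℝ)] with x hx
      have hle : μ {ω | Θ₁ ω * X₁ ω > x ∧ Θ₂ ω * X₂ ω > x} ≤
          μ {ω | X₁ ω > x / Θ₁ ω ∧ X₂ ω > x / Θ₁ ω} + μ {ω | X₁ ω > x / Θ₂ ω ∧ X₂ ω > x / Θ₂ ω} :=
        (measure_mono (hsub x hx)).trans (measure_union_le _ _)
      rw [E2 Θ₁ hΘ₁ hind₁P x, E2 Θ₂ hΘ₂ hind₂P x] at hle
      have hf1 := hJint_fin Θ₁ x
      have hf2 := hJint_fin Θ₂ x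
      have hR := ENNReal.toReal_mono (ENNReal.add_ne_top.mpr ⟨hf1, hf2⟩) hle
      rw [ENNReal.toReal_add hf1 hf2] at hR
      rw [← add_div]
      exact div_le_div_of_nonneg_right hR (hTtoRealpos x).le
    have hzero : Tendsto (fun x =>
        (∫⁻ ω, Jm (x / Θ₁ ω) ∂μ).toReal / (T x).toReal
          + (∫⁻ ω, Jm (x / Θ₂ ω) ∂μ).toReal / (T x).toReal) atTop (𝓝 0) := by
      simpa using hA₁.add hA₂
    exact squeeze_zero' (Filter.Eventually.of_forall fun x =>
      div_nonneg ENNReal.toReal_nonneg ENNReal.toReal_nonneg) hbound hzero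
  -- combine
  have hfinal : ∀ (D : ℝ → ℝ≥0∞) (c : ℝ), 0 < c →
      Tendsto (fun x => (D x).toReal / (T x).toReal) atTop (𝓝 c) →
      Tendsto (fun x =>
        (μ {ω | Θ₁ ω * X₁ ω > x ∧ Θ₂ ω * X₂ ω > x}).toReal / (D x).toReal) atTop (𝓝 0) := by
    intro D c hc hD
    have hq := hNum.div hD hc.ne'
    rw [zero_div] at hq
    refine hq.congr' ?_
    have hev : ∀ᶠ x in atTop, 0 < (D x).toReal := by
      filter_upwards [hD.eventually_const_lt (half_lt_self hc)] with x hx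
      have h2 : 0 < (D x).toReal / (T x).toReal := lt_trans (half_pos hc) hx
      have h3 := mul_pos h2 (hTtoRealpos x)
      rwa [div_mul_cancel₀ _ (hTtoRealpos x).ne'] at h3
    filter_upwards [hev] with x hx
    have hTx := (hTtoRealpos x).ne'
    simp only [Pi.div_apply]
    field_simp
  exact ⟨hfinal (fun x => μ {ω | Θ₁ ω * X₁ ω > x}) _ hc₁ hden₁,
    hfinal (fun x => μ {ω | Θ₂ ω * X₂ ω > x}) _ hc₂ hden₂⟩
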